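/- arXiv:2306.01460 — 2 statements merged into one kernel-verified Lean document; each statement's English description precedes it below -/
import Mathlib

section
/- Let (S, dist) be a metric space, μ a probability measure on S, v : S → ℝ a K-Lipschitz function with ∫ v dμ = v(s₀) for a fixed point s₀ ∈ S. Then ∫ max(0, v(s) − v(s₀)) dμ(s) ≤ (K/2) ∫ dist(s, s₀) dμ(s). -/
open MeasureTheory

theorem integral_posPart_le_lipschitz {S : Type*} [MetricSpace S] [MeasurableSpace S]
    (μ : Measure S) [IsProbabilityMeasure μ] (K : NNReal) (v : S → ℝ)
    (hlip : LipschitzWith K v) (s₀ : S)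
    (hv : Integrable v μ) (hdist : Integrable (fun s => dist s s₀) μ)
    (hmean : ∫ s, v s ∂μ = v s₀) :
    ∫ s, max 0 (v s - v s₀) ∂μ ≤ ((K : ℝ) / 2) * ∫ s, dist s s₀ ∂μ := by
  have hsub : Integrable (fun s => v s - v s₀) μ := hv.sub (integrable_const _)
  have habs : Integrable (fun s => |v s - v s₀|) μ := hsub.abs
  have hzero : ∫ s, (v s - v s₀) ∂μ = 0 := by
    rw [integral_sub hv (integrable_const _), hmean, integral_const]
    simp
  have hmax : ∀ s, max 0 (v s - v s₀) = ((v s - v s₀) + |v s - v s₀|) / 2 := by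
    intro s
    rcases le_or_gt (v s - v s₀) 0 with h | h
    · rw [max_eq_left h, abs_of_nonpos h]; ring
    · rw [max_eq_right h.le, abs_of_pos h]; ring
  calc ∫ s, max 0 (v s - v s₀) ∂μ
      = ∫ s, ((v s - v s₀) + |v s - v s₀|) / 2 ∂μ := by simp_rw [hmax]
    _ = (∫ s, (v s - v s₀) ∂μ + ∫ s, |v s - v s₀| ∂μ) / 2 := by
        rw [integral_div, integral_add hsub habs]
    _ = (∫ s, |v s - v s₀| ∂μ) / 2 := by rw [hzero, zero_add]
    _ ≤ ((K : ℝ) * ∫ s, dist s s₀ ∂μ) / 2 := by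
        apply div_le_div_of_nonneg_right _ (by norm_num)
        rw [← integral_const_mul]
        refine integral_mono habs (hdist.const_mul _) fun s => ?_
        rw [← Real.dist_eq]
        exact hlip.dist_le_mul s s₀
    _ = ((K : ℝ) / 2) * ∫ s, dist s s₀ ∂μ := by ring
end

section
/- Let S, A be finite sets, π : A → ℝ≥0 with ∑ₐ π(a) = 1, p : A → S → ℝ≥0 with ∑ₛ p(a, s') = 1 for each a, and let r : A → ℝ≥0, v : S → ℝ, γ ∈ [0,1]. Define q(a) := r(a) + γ ∑ₛ' p(a, s') v(s') and v₀ := ∑ₐ π(a) q(a). Then ∑ₐ π(a) max(0, q(a) − v₀) ≤ ∑ₐ π(a) [ r(a) + ∑ₛ' p(a, s') max(0, γ v(s') − v₀) ]. -/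
theorem clipped_advantage_decomp_finite {S A : Type*} [Fintype S] [Fintype A]
    (π : A → ℝ) (hπ0 : ∀ a, 0 ≤ π a) (hπ1 : ∑ a, π a = 1)
    (p : A → S → ℝ) (hp0 : ∀ a s', 0 ≤ p a s') (hp1 : ∀ a, ∑ s', p a s' = 1)
    (r : A → ℝ) (hr0 : ∀ a, 0 ≤ r a) (v : S → ℝ)
    (γ : ℝ) (hγ : γ ∈ Set.Icc (0 : ℝ) 1)
    (q : A → ℝ) (hq : ∀ a, q a = r a + γ * ∑ s', p a s' * v s')
    (v₀ : ℝ) (hv₀ : v₀ = ∑ a, π a * q a) :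
    ∑ a, π a * max 0 (q a - v₀) ≤
      ∑ a, π a * (r a + ∑ s', p a s' * max 0 (γ * v s' - v₀)) := by
  apply Finset.sum_le_sum
  intro a _
  apply mul_le_mul_of_nonneg_left _ (hπ0 a)
  have hx : q a - v₀ = r a + ∑ s', p a s' * (γ * v s' - v₀) := by
    rw [hq a]
    have h2 : ∑ s', p a s' * (γ * v s' - v₀)
        = (∑ s', γ * (p a s' * v s')) - (∑ s', p a s') * v₀ := by
      rw [Finset.sum_mul, ← Finset.sum_sub_distrib]
      exact Finset.sum_congr rfl (fun s _ => by ring)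
    rw [h2, hp1 a, ← Finset.mul_sum]
    ring
  rw [hx]
  have h1 : max 0 (r a + ∑ s', p a s' * (γ * v s' - v₀)) ≤
      r a + max 0 (∑ s', p a s' * (γ * v s' - v₀)) := by
    apply max_le
    · exact add_nonneg (hr0 a) (le_max_left _ _)
    · gcongr; exact le_max_right _ _
  refine h1.trans ?_
  gcongr
  apply max_le
  · apply Finset.sum_nonneg
    intro s _
    exact mul_nonneg (hp0 a s) (le_max_left _ _)
  · apply Finset.sum_le_sum
    intro s _
    exact mul_le_mul_of_nonneg_left (le_max_right _ _) (hp0 a s)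
end
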